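/- Let A, B ⊂ ℝ be finite nonempty point sets with B = {b_1 < b_2 < … < b_n}, and let T_A := ⋃_{a∈A} ( {b_i − a : i ∈ [n]} ∪ {(b_{i+1}+b_i)/2 − a : i ∈ [n−1]} ). Then the function CDpT(t) := CD(A+t, B) is continuous on ℝ, and on every open interval I ⊂ ℝ with I ∩ T_A = ∅ the function CDpT is affine (i.e., it agrees with a function of the form t ↦ αt + β on I). -/
import Mathlib


open Finset
open scoped Classical

/-- Chamfer distance from finset `A` to finset `B` in `ℝ`:
`CD(A,B) = Σ_{a∈A} min_{b∈B} |a−b|`. -/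
noncomputable def CD (A B : Finset ℝ) : ℝ :=
  ∑ a ∈ A, Metric.infDist a (B : Set ℝ)

/-- The translate `A + t = {a + t : a ∈ A}`. -/
noncomputable def shiftSet (A : Finset ℝ) (t : ℝ) : Finset ℝ :=
  A.image (· + t)

/-- Chamfer distance under translation: `CDuT(A,B) = inf_{t∈ℝ} CD(A+t,B)`. -/
noncomputable def CDuT (A B : Finset ℝ) : ℝ :=
  ⨅ t : ℝ, CD (shiftSet A t) B

/-- There is a nearest point in the range of `b`. -/
lemma cdpt_exists_nearest {n : ℕ} (hn : 0 < n) (b : Fin n → ℝ) (x : ℝ) :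
    ∃ i : Fin n, Metric.infDist x (Set.range b) = |x - b i| := by
  obtain ⟨y, hy, hxy⟩ := (Set.finite_range b).isCompact.exists_infDist_eq_dist
    (Set.range_nonempty_iff_nonempty.2 ⟨⟨0, hn⟩⟩) x
  obtain ⟨i, rfl⟩ := hy
  exact ⟨i, by rw [hxy, Real.dist_eq]⟩

lemma cdpt_infDist_le {n : ℕ} (b : Fin n → ℝ) (x : ℝ) (j : Fin n) :
    Metric.infDist x (Set.range b) ≤ |x - b j| := by
  have := Metric.infDist_le_dist_of_mem (x := x) (Set.mem_range_self (f := b) j)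
  rwa [Real.dist_eq] at this

/-- Uniqueness of the nearest point for non-critical `x`. -/
lemma cdpt_nearest_unique {n : ℕ} (b : Fin n → ℝ) (hb : StrictMono b) (x : ℝ)
    (hx2 : ∀ i j : Fin n, (j : ℕ) = (i : ℕ) + 1 → x ≠ (b j + b i) / 2)
    {i j : Fin n} (hi : Metric.infDist x (Set.range b) = |x - b i|)
    (hj : Metric.infDist x (Set.range b) = |x - b j|) : i = j := by
  have key : ∀ i j : Fin n, i < j → Metric.infDist x (Set.range b) = |x - b i| →
      Metric.infDist x (Set.range b) = |x - b j| → False := by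
    intro i j hij hi hj
    have hbij : b i < b j := hb hij
    have habs : |x - b i| = |x - b j| := by rw [← hi, hj]
    have hx : x = (b i + b j) / 2 := by
      rcases abs_eq_abs.1 habs with h | h
      · linarith
      · linarith
    by_cases hadj : (j : ℕ) = (i : ℕ) + 1
    · exact hx2 i j hadj (by linarith)
    · have hij' : (i : ℕ) + 1 < (j : ℕ) := by
        have : (i : ℕ) < (j : ℕ) := hij
        omega
      set k : Fin n := ⟨(i : ℕ) + 1, lt_trans hij' j.isLt⟩ with hk
      have hik : i < k := by simp [hk, Fin.lt_def]
      have hkj : k < j := by simp [hk, Fin.lt_def]; omega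
      have hbik : b i < b k := hb hik
      have hbkj : b k < b j := hb hkj
      have h1 : |x - b k| < (b j - b i) / 2 := by
        rw [hx, abs_lt]; constructor <;> linarith
      have h2 : |x - b i| = (b j - b i) / 2 := by
        rw [hx, abs_of_pos (by linarith)]; ring
      have h3 := cdpt_infDist_le b x k
      rw [hi, h2] at h3
      linarith
  rcases lt_trichotomy i j with h | h | h
  · exact absurd (key i j h hi hj) (by simp)
  · exact h
  · exact absurd (key j i h hj hi) (by simp)

lemma cdpt_abs_eq {u t : ℝ} (ht : t = 1 ∨ t = -1) (hu : 0 < t * u) : |u| = t * u := by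
  rcases ht with rfl | rfl
  · rw [one_mul] at hu ⊢; exact abs_of_pos hu
  · rw [neg_one_mul] at hu; rw [abs_of_neg (by linarith)]; ring

/-- Local affine representation of the distance function at non-critical points. -/
lemma cdpt_local_affine {n : ℕ} (hn : 0 < n) (b : Fin n → ℝ) (hb : StrictMono b) (x : ℝ)
    (hx1 : ∀ i : Fin n, x ≠ b i)
    (hx2 : ∀ i j : Fin n, (j : ℕ) = (i : ℕ) + 1 → x ≠ (b j + b i) / 2) :
    ∃ (i : Fin n) (σ : ℝ), (σ = 1 ∨ σ = -1) ∧ 0 < σ * (x - b i) ∧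
      ∀ᶠ y in nhds x, Metric.infDist y (Set.range b) = σ * (y - b i) := by
  obtain ⟨i, hi⟩ := cdpt_exists_nearest hn b x
  have hne : x - b i ≠ 0 := sub_ne_zero.2 (hx1 i)
  set σ : ℝ := if 0 < x - b i then 1 else -1 with hσ
  have hσor : σ = 1 ∨ σ = -1 := by rw [hσ]; split_ifs <;> simp
  have hσpos : 0 < σ * (x - b i) := by
    rw [hσ]; split_ifs with h
    · simpa using h
    · rw [neg_one_mul]
      have : x - b i < 0 := lt_of_le_of_ne (not_lt.1 h) hne
      linarith
  refine ⟨i, σ, hσor, hσpos, ?_⟩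
  · have hstrict : ∀ j : Fin n, j ≠ i → |x - b i| < |x - b j| := by
      intro j hji
      have hle : |x - b i| ≤ |x - b j| := hi ▸ cdpt_infDist_le b x j
      rcases lt_or_eq_of_le hle with h | h
      · exact h
      · exact absurd (cdpt_nearest_unique b hb x hx2 hi (hi.trans h)) (Ne.symm hji)
    have h1 : ∀ᶠ y in nhds x, 0 < σ * (y - b i) := by
      apply ContinuousAt.eventually_lt continuousAt_const
      · exact (continuous_const.mul (continuous_id.sub continuous_const)).continuousAt
      · exact hσpos
    have h2 : ∀ᶠ y in nhds x, ∀ j : Fin n, j ≠ i → |y - b i| < |y - b j| := by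
      rw [Filter.eventually_all]
      intro j
      by_cases hji : j = i
      · filter_upwards with y hy; exact absurd hji hy
      · filter_upwards [ContinuousAt.eventually_lt
          (f := fun y => |y - b i|) (g := fun y => |y - b j|)
          ((continuous_id.sub continuous_const).abs.continuousAt)
          ((continuous_id.sub continuous_const).abs.continuousAt)
          (hstrict j hji)] with y hy _
        exact hy
    filter_upwards [h1, h2] with y hy1 hy2
    have hgy : Metric.infDist y (Set.range b) = |y - b i| := by
      obtain ⟨k, hk⟩ := cdpt_exists_nearest hn b y
      by_cases hki : k = i
      · rw [hk, hki]
      · have := cdpt_infDist_le b y i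
        rw [hk] at this ⊢
        exact absurd (lt_of_le_of_lt this (hy2 k hki)) (lt_irrefl _)
    rw [hgy, cdpt_abs_eq hσor hy1]

lemma cdpt_sign_eq {σ σ' u : ℝ} (hσ : σ = 1 ∨ σ = -1) (hσ' : σ' = 1 ∨ σ' = -1)
    (h : 0 < σ * u) (h' : 0 < σ' * u) : σ = σ' := by
  rcases hσ with rfl | rfl <;> rcases hσ' with rfl | rfl <;> [rfl; skip; skip; rfl] <;> nlinarith

/-- `CDpT(t) := CD(A+t,B)` is continuous on `ℝ`, and affine on every open interval
disjoint from the critical set `T_A`. -/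
theorem cdpt_continuous_piecewise_affine (A : Finset ℝ) (hA : A.Nonempty)
    (n : ℕ) (hn : 0 < n) (b : Fin n → ℝ) (hb : StrictMono b)
    (B : Finset ℝ) (hB : B = Finset.image b Finset.univ)
    (T_A : Set ℝ)
    (hT : T_A = {t : ℝ | ∃ a ∈ A, (∃ i : Fin n, t = b i - a) ∨
      (∃ i j : Fin n, (j : ℕ) = (i : ℕ) + 1 ∧ t = (b j + b i) / 2 - a)}) :
    Continuous (fun t : ℝ => CD (shiftSet A t) B) ∧
    ∀ I : Set ℝ, IsOpen I → I.OrdConnected → I ∩ T_A = ∅ →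
      ∃ α β : ℝ, ∀ t ∈ I, CD (shiftSet A t) B = α * t + β := by
  have hBr : (B : Set ℝ) = Set.range b := by
    rw [hB]; rw [Finset.coe_image, Finset.coe_univ, Set.image_univ]
  have hsum : ∀ t : ℝ, CD (shiftSet A t) B
      = ∑ a ∈ A, Metric.infDist (a + t) (Set.range b) := by
    intro t
    rw [CD, shiftSet, Finset.sum_image (fun x _ y _ h => by linarith [h] : ∀ x ∈ A, ∀ y ∈ A, x + t = y + t → x = y)]
    simp_rw [hBr]
  constructor
  · have : (fun t : ℝ => CD (shiftSet A t) B)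
        = fun t : ℝ => ∑ a ∈ A, Metric.infDist (a + t) (Set.range b) := funext hsum
    rw [this]
    exact continuous_finset_sum _ fun a _ =>
      (Metric.continuous_infDist_pt _).comp (continuous_const.add continuous_id)
  · intro I hIopen hIord hIT
    rcases I.eq_empty_or_nonempty with hIe | ⟨t₀, ht₀⟩
    · exact ⟨0, 0, fun t ht => absurd ht (by simp [hIe])⟩
    have hPre : IsPreconnected I := hIord.isPreconnected
    have hCr : ∀ a ∈ A, ∀ t ∈ I, (∀ i : Fin n, a + t ≠ b i) ∧
        (∀ i j : Fin n, (j : ℕ) = (i : ℕ) + 1 → a + t ≠ (b j + b i) / 2) := by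
      intro a ha t ht
      have htT : t ∉ T_A := fun h =>
        Set.eq_empty_iff_forall_notMem.1 hIT t ⟨ht, h⟩
      constructor
      · intro i h
        exact htT (by rw [hT]; exact ⟨a, ha, Or.inl ⟨i, by linarith⟩⟩)
      · intro i j hij h
        exact htT (by rw [hT]; exact ⟨a, ha, Or.inr ⟨i, j, hij, by linarith⟩⟩)
    have key : ∀ a ∈ A, ∃ α β : ℝ, ∀ t ∈ I,
        Metric.infDist (a + t) (Set.range b) = α * t + β := by
      intro a ha
      obtain ⟨i₀, σ₀, hσ₀, hpos₀, hev₀⟩ := cdpt_local_affine hn b hb (a + t₀)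
        (hCr a ha t₀ ht₀).1 (hCr a ha t₀ ht₀).2
      -- the two pieces of I
      set U : Set ℝ := {t | t ∈ I ∧
        Metric.infDist (a + t) (Set.range b) = σ₀ * (a + t - b i₀)} with hU
      set V : Set ℝ := {t | t ∈ I ∧
        Metric.infDist (a + t) (Set.range b) ≠ σ₀ * (a + t - b i₀)} with hV
      have htend : ∀ t : ℝ, Filter.Tendsto (fun s : ℝ => a + s) (nhds t) (nhds (a + t)) :=
        fun t => (continuous_const.add continuous_id).continuousAt
      -- key identification step
      have hident : ∀ t ∈ I, ∀ (i : Fin n) (σ : ℝ), (σ = 1 ∨ σ = -1) →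
          0 < σ * (a + t - b i) →
          Metric.infDist (a + t) (Set.range b) = σ * (a + t - b i) →
          Metric.infDist (a + t) (Set.range b) = σ₀ * (a + t - b i₀) →
          i = i₀ ∧ σ = σ₀ := by
        intro t ht i σ hσ hpos heq heq₀
        have hpos₀' : 0 < σ₀ * (a + t - b i₀) := by rw [← heq₀, heq]; exact hpos
        have hii : i = i₀ := by
          refine cdpt_nearest_unique b hb (a + t) (hCr a ha t ht).2 ?_ ?_
          · rw [heq, cdpt_abs_eq hσ hpos]
          · rw [heq₀, cdpt_abs_eq hσ₀ hpos₀']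
        refine ⟨hii, cdpt_sign_eq hσ hσ₀ hpos ?_⟩
        rw [hii] at hpos ⊢
        exact hpos₀'
      have hUopen : IsOpen U := by
        rw [isOpen_iff_mem_nhds]
        rintro t ⟨htI, hteq⟩
        obtain ⟨i, σ, hσ, hpos, hev⟩ := cdpt_local_affine hn b hb (a + t)
          (hCr a ha t htI).1 (hCr a ha t htI).2
        have hself := hev.self_of_nhds
        obtain ⟨hii, hσσ⟩ := hident t htI i σ hσ hpos hself hteq
        rw [hii, hσσ] at hev
        filter_upwards [hIopen.mem_nhds htI, (htend t).eventually hev] with s hsI hseq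
        exact ⟨hsI, hseq⟩
      have hVopen : IsOpen V := by
        rw [isOpen_iff_mem_nhds]
        rintro t ⟨htI, htne⟩
        obtain ⟨i, σ, hσ, hpos, hev⟩ := cdpt_local_affine hn b hb (a + t)
          (hCr a ha t htI).1 (hCr a ha t htI).2
        have hposev : ∀ᶠ y in nhds (a + t), 0 < σ * (y - b i) := by
          apply ContinuousAt.eventually_lt continuousAt_const
          · exact (continuous_const.mul (continuous_id.sub continuous_const)).continuousAt
          · exact hpos
        filter_upwards [hIopen.mem_nhds htI, (htend t).eventually hev,
          (htend t).eventually hposev] with s hsI hseq hspos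
        refine ⟨hsI, fun hcontra => ?_⟩
        obtain ⟨hii, hσσ⟩ := hident s hsI i σ hσ hspos hseq hcontra
        rw [hii, hσσ] at hev
        exact htne ((hev.self_of_nhds))
      have hVempty : I ∩ V = ∅ := by
        by_contra hne
        have hUV : U ∩ V = ∅ := by
          ext t; simp only [Set.mem_inter_iff, Set.mem_empty_iff_false, iff_false]
          rintro ⟨⟨_, h1⟩, ⟨_, h2⟩⟩; exact h2 h1
        have hsub : I ⊆ U ∪ V := by
          intro t ht
          by_cases h : Metric.infDist (a + t) (Set.range b) = σ₀ * (a + t - b i₀)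
          · exact Or.inl ⟨ht, h⟩
          · exact Or.inr ⟨ht, h⟩
        have hUne : (I ∩ U).Nonempty := ⟨t₀, ht₀, ht₀, hev₀.self_of_nhds⟩
        have hVne : (I ∩ V).Nonempty := Set.nonempty_iff_ne_empty.2 hne
        obtain ⟨t, _, htU, htV⟩ := hPre U V hUopen hVopen hsub hUne hVne
        exact absurd (Set.mem_inter htU htV) (by rw [hUV]; simp)
      refine ⟨σ₀, σ₀ * (a - b i₀), fun t ht => ?_⟩
      have htU : t ∈ U := by
        have hnV : t ∉ V := fun h => Set.eq_empty_iff_forall_notMem.1 hVempty t ⟨ht, h⟩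
        by_cases hc : Metric.infDist (a + t) (Set.range b) = σ₀ * (a + t - b i₀)
        · exact ⟨ht, hc⟩
        · exact absurd ⟨ht, hc⟩ hnV
      rw [htU.2]; ring
    choose! α β hαβ using key
    refine ⟨∑ a ∈ A, α a, ∑ a ∈ A, β a, fun t ht => ?_⟩
    rw [hsum, Finset.sum_congr rfl (fun a ha => hαβ a ha t ht), Finset.sum_add_distrib,
      ← Finset.sum_mul]
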